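/- Let p₀, p₁, p₂, q₀, q₁ ∈ ℂ with p₀ ≠ 0. Then there exists exactly one formal power series F = ∑_{n≥0} c_n s^n ∈ ℂ[[s]] satisfying the equation −2s⁴·dF/ds = −s²(p₁s − p₀)·F² + ((p₂/p₀)s² + 2s³ − 1)·F + q₁·s + q₀ in ℂ[[s]], where dF/ds is the formal derivative. -/

import Mathlib

open PowerSeries

noncomputable section RiccatiAux

/-- The fixed-point map `Φ` for the Riccati equation. -/
def riccatiPhi (p₀ p₁ p₂ q₀ q₁ : ℂ) (F : PowerSeries ℂ) : PowerSeries ℂ :=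
  C q₀ + C q₁ * X + (C (p₂ / p₀) * X ^ 2 + 2 * X ^ 3) * F
    + (C p₀ * X ^ 2 - C p₁ * X ^ 3) * F ^ 2
    + X ^ 4 * (F.derivativeFun + F.derivativeFun)

/-- The coefficient of `Φ F` at `n` only depends on the coefficients of `F` below `n`. -/
theorem riccatiPhi_coeff_congr (p₀ p₁ p₂ q₀ q₁ : ℂ) (F G : PowerSeries ℂ) (n : ℕ)
    (h : ∀ k < n, coeff k F = coeff k G) :
    coeff n (riccatiPhi p₀ p₁ p₂ q₀ q₁ F) = coeff n (riccatiPhi p₀ p₁ p₂ q₀ q₁ G) := by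
  set D := F - G with hD
  have hDk : ∀ k < n, coeff k D = 0 := by
    intro k hk
    simp [hD, map_sub, h k hk]
  rw [← sub_eq_zero, ← map_sub]
  have key : riccatiPhi p₀ p₁ p₂ q₀ q₁ F - riccatiPhi p₀ p₁ p₂ q₀ q₁ G
      = (C (p₂ / p₀) * X ^ 2 + 2 * X ^ 3 + (C p₀ * X ^ 2 - C p₁ * X ^ 3) * (F + G)) * D
        + X ^ 4 * ((F.derivativeFun - G.derivativeFun) + (F.derivativeFun - G.derivativeFun)) := by
    rw [riccatiPhi, riccatiPhi, hD]
    ring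
  rw [key, map_add]
  have h1 : coeff n ((C (p₂ / p₀) * X ^ 2 + 2 * X ^ 3
      + (C p₀ * X ^ 2 - C p₁ * X ^ 3) * (F + G)) * D) = 0 := by
    rw [coeff_mul]
    refine Finset.sum_eq_zero fun x hx => ?_
    rcases lt_or_ge x.2 n with h2 | h2
    · rw [hDk x.2 h2, mul_zero]
    · have hmem := Finset.HasAntidiagonal.mem_antidiagonal.mp hx
      have hx1 : x.1 = 0 := by omega
      rw [hx1]
      have hc0 : coeff 0 (C (p₂ / p₀) * X ^ 2 + 2 * X ^ 3
          + (C p₀ * X ^ 2 - C p₁ * X ^ 3) * (F + G)) = 0 := by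
        simp [coeff_zero_eq_constantCoeff, map_add, map_mul, map_sub]
      rw [hc0, zero_mul]
  have h2 : coeff n (X ^ 4 * ((F.derivativeFun - G.derivativeFun) + (F.derivativeFun - G.derivativeFun))) = 0 := by
    rw [coeff_X_pow_mul']
    split_ifs with h4
    · have e : coeff (n - 4 + 1) F = coeff (n - 4 + 1) G := h _ (by omega)
      simp [map_add, map_sub, coeff_derivativeFun, e, derivativeFun]
    · rfl
  rw [h1, h2, add_zero]

/-- The solution coefficients, by strong recursion. -/
def riccatiC (p₀ p₁ p₂ q₀ q₁ : ℂ) : ℕ → ℂ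
  | n => coeff n (riccatiPhi p₀ p₁ p₂ q₀ q₁
      (mk fun k => if h : k < n then riccatiC p₀ p₁ p₂ q₀ q₁ k else 0))
  termination_by n => n
  decreasing_by exact h

theorem riccatiC_fixed (p₀ p₁ p₂ q₀ q₁ : ℂ) :
    (mk (riccatiC p₀ p₁ p₂ q₀ q₁) : PowerSeries ℂ)
      = riccatiPhi p₀ p₁ p₂ q₀ q₁ (mk (riccatiC p₀ p₁ p₂ q₀ q₁)) := by
  ext n
  rw [coeff_mk, riccatiC]
  exact riccatiPhi_coeff_congr p₀ p₁ p₂ q₀ q₁ _ _ n (fun k hk => by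
    rw [coeff_mk, coeff_mk, dif_pos hk])

end RiccatiAux

open PowerSeries in
/-- **Existence and uniqueness of the formal power-series Riccati solution**
(Ramis–Hsieh–Sibuya, applied in Section 4). The Riccati equation
`2t∂ₜF = −(p₁ − tp₀)F² + ((p₂/p₀)t + 2 − t³)F + t²(q₁ + tq₀)`, rewritten in `s = t^{-1}`
as `−2s⁴ dF/ds = −s²(p₁s − p₀)F² + ((p₂/p₀)s² + 2s³ − 1)F + q₁s + q₀`,
has exactly one formal power-series solution `F = ∑ c_n sⁿ ∈ ℂ⟦s⟧`. -/
theorem riccati_formal_solution_existsUnique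
    (p₀ p₁ p₂ q₀ q₁ : ℂ) (hp₀ : p₀ ≠ 0) :
    ∃! F : PowerSeries ℂ,
      -2 * X ^ 4 * F.derivativeFun =
        -(X ^ 2 * (C p₁ * X - C p₀)) * F ^ 2
          + (C (p₂ / p₀) * X ^ 2 + 2 * X ^ 3 - 1) * F
          + C q₁ * X + C q₀ := by
  have equiv : ∀ F : PowerSeries ℂ,
      (-2 * X ^ 4 * F.derivativeFun =
        -(X ^ 2 * (C p₁ * X - C p₀)) * F ^ 2
          + (C (p₂ / p₀) * X ^ 2 + 2 * X ^ 3 - 1) * F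
          + C q₁ * X + C q₀) ↔ F = riccatiPhi p₀ p₁ p₂ q₀ q₁ F := by
    intro F
    rw [riccatiPhi]
    constructor
    · intro h; linear_combination h
    · intro h; linear_combination h
  refine ⟨mk (riccatiC p₀ p₁ p₂ q₀ q₁), (equiv _).mpr (riccatiC_fixed p₀ p₁ p₂ q₀ q₁), ?_⟩
  intro G hG
  rw [equiv] at hG
  have hfix := riccatiC_fixed p₀ p₁ p₂ q₀ q₁
  ext n
  induction n using Nat.strong_induction_on with
  | _ n ih =>
    calc coeff n G = coeff n (riccatiPhi p₀ p₁ p₂ q₀ q₁ G) := by rw [← hG]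
      _ = coeff n (riccatiPhi p₀ p₁ p₂ q₀ q₁ (mk (riccatiC p₀ p₁ p₂ q₀ q₁))) :=
          riccatiPhi_coeff_congr _ _ _ _ _ _ _ _ (fun k hk => ih k hk)
      _ = coeff n (mk (riccatiC p₀ p₁ p₂ q₀ q₁)) := by rw [← hfix]
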